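/- arXiv:2005.02735 — 3 statements merged into one kernel-verified Lean document; each statement's English description precedes it below -/
import Mathlib

section
/- Let $q \in (0,1]$ and let $k \ge 1$ be an integer. For any positive real numbers $t_1, \dots, t_k$, one has $t_1^q + \cdots + t_k^q \ge \big(\sum_{i=1}^k t_i\big)^q + \big(1 - \tfrac{1}{2^{1-q}}\big)\big((k-1)\min_{i \le k} t_i\big)^q$. -/
open Real

lemma subadd {q a b : ℝ} (hq0 : 0 ≤ q) (hq1 : q ≤ 1) (ha : 0 ≤ a) (hb : 0 ≤ b) :
    (a + b) ^ q ≤ a ^ q + b ^ q := by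
  lift a to NNReal using ha
  lift b to NNReal using hb
  exact_mod_cast NNReal.rpow_add_le_add_rpow a b hq0 hq1

lemma cnonneg {q : ℝ} (hq1 : q ≤ 1) : (0:ℝ) ≤ 1 - 1 / (2:ℝ) ^ (1 - q) := by
  have h1 : (1:ℝ) ≤ 2 ^ (1 - q) := Real.one_le_rpow (by norm_num) (by linarith)
  have h2 : (0:ℝ) < (2:ℝ) ^ (1 - q) := by positivity
  rw [sub_nonneg, div_le_one h2]
  exact h1

lemma two_var (q : ℝ) (hq0 : 0 < q) (hq1 : q ≤ 1) {a b : ℝ} (hb : 0 < b) (hba : b ≤ a) :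
    a ^ q + b ^ q ≥ (a + b) ^ q + (1 - 1 / (2:ℝ) ^ (1 - q)) * b ^ q := by
  have ha : 0 < a := lt_of_lt_of_le hb hba
  have ha' : a ≠ 0 := ha.ne'
  have hcc := Real.concaveOn_rpow hq0.le hq1
  set l : ℝ := b / a with hl
  set m : ℝ := (a - b) / a with hm
  have hl0 : 0 ≤ l := by positivity
  have hm0 : 0 ≤ m := div_nonneg (by linarith) ha.le
  have hlm : l + m = 1 := by rw [hl, hm]; field_simp; ring
  have h1 : l • b + m • (a + b) = a := by
    rw [smul_eq_mul, smul_eq_mul, hl, hm]; field_simp; ring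
  have h2 : m • b + l • (a + b) = 2 * b := by
    rw [smul_eq_mul, smul_eq_mul, hl, hm]; field_simp; ring
  have hA := hcc.2 (Set.mem_Ici.2 hb.le) (Set.mem_Ici.2 (by positivity : (0:ℝ) ≤ a + b)) hl0 hm0 hlm
  have hB := hcc.2 (Set.mem_Ici.2 hb.le) (Set.mem_Ici.2 (by positivity : (0:ℝ) ≤ a + b)) hm0 hl0
    (by linarith)
  rw [h1] at hA
  rw [h2] at hB
  simp only [smul_eq_mul] at hA hB
  have key : a ^ q + (2 * b) ^ q ≥ b ^ q + (a + b) ^ q := by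
    have heq : (l + m) * b ^ q + (l + m) * (a + b) ^ q =
        l * b ^ q + m * (a + b) ^ q + (m * b ^ q + l * (a + b) ^ q) := by ring
    rw [hlm] at heq
    linarith
  have h2b : (2 * b) ^ q = (2:ℝ) ^ q * b ^ q := Real.mul_rpow (by norm_num) hb.le
  have h2q : (2:ℝ) ^ q ≤ 2 := by
    calc (2:ℝ) ^ q ≤ (2:ℝ) ^ (1:ℝ) := Real.rpow_le_rpow_of_exponent_le (by norm_num) hq1
    _ = 2 := Real.rpow_one 2
  have hinv : 1 / (2:ℝ) ^ (1 - q) = (2:ℝ) ^ q / 2 := by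
    rw [one_div, ← Real.rpow_neg (by norm_num : (0:ℝ) ≤ 2), neg_sub,
      Real.rpow_sub (by norm_num : (0:ℝ) < 2), Real.rpow_one]
  have hc : (1 - 1 / (2:ℝ) ^ (1 - q)) ≤ 2 - (2:ℝ) ^ q := by
    rw [hinv]; nlinarith
  have hbq : (0:ℝ) ≤ b ^ q := by positivity
  nlinarith [key, mul_le_mul_of_nonneg_right hc hbq]

lemma two_var' (q : ℝ) (hq0 : 0 < q) (hq1 : q ≤ 1) {a b : ℝ} (ha : 0 < a) (hb : 0 < b) :
    a ^ q + b ^ q ≥ (a + b) ^ q + (1 - 1 / (2:ℝ) ^ (1 - q)) * (min a b) ^ q := by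
  rcases le_total b a with h | h
  · rw [min_eq_right h]; exact two_var q hq0 hq1 hb h
  · rw [min_eq_left h, add_comm a b]
    linarith [two_var q hq0 hq1 ha h]

theorem stmt_1 (q : ℝ) (hq0 : 0 < q) (hq1 : q ≤ 1) (k : ℕ)
    (t : Fin (k + 1) → ℝ) (ht : ∀ i, 0 < t i) :
    ∑ i, t i ^ q ≥ (∑ i, t i) ^ q +
      (1 - 1 / 2 ^ (1 - q)) * ((k : ℝ) * Finset.univ.inf' Finset.univ_nonempty t) ^ q := by
  have hc := cnonneg hq1
  induction k with
  | zero =>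
    simp [Real.zero_rpow hq0.ne']
  | succ k ih =>
    set c : ℝ := 1 - 1 / (2:ℝ) ^ (1 - q) with hcdef
    set s : Fin (k + 1) → ℝ := fun i => t i.castSucc with hs
    set a : ℝ := t (Fin.last (k + 1)) with hadef
    have hs' : ∀ i, 0 < s i := fun i => ht _
    have ha : 0 < a := ht _
    set S : ℝ := ∑ i, s i with hSdef
    have hS : 0 < S := Finset.sum_pos (fun i _ => hs' i) Finset.univ_nonempty
    set M : ℝ := Finset.univ.inf' Finset.univ_nonempty t with hMdef
    set M' : ℝ := Finset.univ.inf' Finset.univ_nonempty s with hM'def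
    have hMle : ∀ i, M ≤ t i := fun i => Finset.inf'_le _ (Finset.mem_univ i)
    have hM0 : 0 < M := by
      rw [hMdef, Finset.lt_inf'_iff]
      exact fun i _ => ht i
    have hMM' : M ≤ M' := Finset.le_inf' _ _ (fun i _ => hMle _)
    have hsplit : ∑ i, t i = S + a := Fin.sum_univ_castSucc t
    have hsplitq : ∑ i, t i ^ q = (∑ i, s i ^ q) + a ^ q :=
      Fin.sum_univ_castSucc (fun i => t i ^ q)
    have hIH := ih s hs'
    have htv := two_var' q hq0 hq1 hS ha
    rw [← hcdef] at htv
    -- combine the two defects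
    have hsub : (min S a + (k : ℝ) * M') ^ q ≤ (min S a) ^ q + ((k : ℝ) * M') ^ q :=
      subadd hq0.le hq1 (lt_min hS ha).le (mul_nonneg (Nat.cast_nonneg k) (hM0.le.trans hMM'))
    have hMa : M ≤ a := hMle _
    have hMS : M ≤ S := by
      calc M ≤ s 0 := hMle _
      _ ≤ S := Finset.single_le_sum (fun i _ => (hs' i).le) (Finset.mem_univ 0)
    have hmono : (((k:ℝ) + 1) * M) ^ q ≤ (min S a + (k : ℝ) * M') ^ q := by
      apply Real.rpow_le_rpow (mul_nonneg (by positivity) hM0.le)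
      · have : (k:ℝ) * M ≤ (k:ℝ) * M' := by
          apply mul_le_mul_of_nonneg_left hMM' (by positivity)
        have h2 : M ≤ min S a := le_min hMS hMa
        nlinarith
      · exact hq0.le
    have hfin : ((k:ℝ) + 1) * M = ((k + 1 : ℕ) : ℝ) * M := by push_cast; ring
    calc ∑ i, t i ^ q = (∑ i, s i ^ q) + a ^ q := hsplitq
      _ ≥ (S ^ q + c * ((k : ℝ) * M') ^ q) + a ^ q := by linarith
      _ ≥ ((S + a) ^ q + c * (min S a) ^ q) + c * ((k : ℝ) * M') ^ q := by linarith
      _ ≥ (S + a) ^ q + c * (min S a + (k : ℝ) * M') ^ q := by nlinarith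
      _ ≥ (S + a) ^ q + c * (((k:ℝ) + 1) * M) ^ q := by nlinarith
      _ = (∑ i, t i) ^ q + c * (((k + 1 : ℕ) : ℝ) * M) ^ q := by rw [hsplit, hfin]
end

section
/- Let $d \ge 3$. There exists a constant $C > 0$ such that for every finite subset $\Lambda \subseteq \mathbb{Z}^d$, $\sum_{z \in \Lambda} \frac{1}{1 + \|z\|^{d-2}} \le C |\Lambda|^{2/d}$, where $\|\cdot\|$ denotes the Euclidean norm. -/
/-- Euclidean norm of a point of `ℤ^d`. -/
noncomputable def euclidNorm (d : ℕ) (z : Fin d → ℤ) : ℝ :=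
  Real.sqrt (∑ i, ((z i : ℝ)) ^ 2)

lemma euclidNorm_nonneg (d : ℕ) (z : Fin d → ℤ) : 0 ≤ euclidNorm d z :=
  Real.sqrt_nonneg _

lemma abs_le_euclidNorm (d : ℕ) (z : Fin d → ℤ) (i : Fin d) :
    |(z i : ℝ)| ≤ euclidNorm d z := by
  rw [euclidNorm, ← Real.sqrt_sq_eq_abs]
  exact Real.sqrt_le_sqrt (Finset.single_le_sum (f := fun j => ((z j : ℝ)) ^ 2)
    (fun j _ => sq_nonneg _) (Finset.mem_univ i))

noncomputable def box (d M : ℕ) : Finset (Fin d → ℤ) :=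
  Finset.Icc (fun _ => -(M : ℤ)) (fun _ => (M : ℤ))

lemma mem_box {d M : ℕ} {z : Fin d → ℤ} :
    z ∈ box d M ↔ ∀ i, -(M : ℤ) ≤ z i ∧ z i ≤ M := by
  simp [box, Finset.mem_Icc, Pi.le_def, forall_and]

lemma box_card (d M : ℕ) : (box d M).card = (2 * M + 1) ^ d := by
  rw [box, Pi.card_Icc]
  have : ∀ i : Fin d, (Finset.Icc (-(M:ℤ)) (M:ℤ)).card = 2 * M + 1 := by
    intro i
    rw [Int.card_Icc]
    omega
  rw [Finset.prod_congr rfl (fun i _ => this i)]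
  simp

lemma box_mono (d : ℕ) {M N : ℕ} (h : M ≤ N) : box d M ⊆ box d N := by
  intro z hz
  rw [mem_box] at hz ⊢
  intro i
  have := hz i
  constructor <;> [omega; omega]

lemma f_nonneg (d : ℕ) (z : Fin d → ℤ) :
    0 ≤ 1 / (1 + euclidNorm d z ^ (d - 2)) := by
  have := euclidNorm_nonneg d z
  positivity

lemma f_le (d : ℕ) (z : Fin d → ℤ) {r : ℝ} (hr : 0 < r) (h : r ≤ euclidNorm d z) :
    1 / (1 + euclidNorm d z ^ (d - 2)) ≤ 1 / r ^ (d - 2) := by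
  apply one_div_le_one_div_of_le (pow_pos hr _)
  have h1 : r ^ (d - 2) ≤ euclidNorm d z ^ (d - 2) := pow_le_pow_left₀ hr.le h _
  linarith

lemma pow_sub_pow_le (a b : ℝ) (h0 : 0 ≤ b) (hba : b ≤ a) (n : ℕ) :
    a ^ n - b ^ n ≤ n * a ^ (n - 1) * (a - b) := by
  rw [← geom_sum₂_mul a b n]
  apply mul_le_mul_of_nonneg_right _ (by linarith)
  have ha : 0 ≤ a := le_trans h0 hba
  calc ∑ i ∈ Finset.range n, a ^ i * b ^ (n - 1 - i)
      ≤ ∑ _i ∈ Finset.range n, a ^ (n - 1) := by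
        apply Finset.sum_le_sum
        intro i hi
        rw [Finset.mem_range] at hi
        calc a ^ i * b ^ (n - 1 - i) ≤ a ^ i * a ^ (n - 1 - i) :=
              mul_le_mul_of_nonneg_left (pow_le_pow_left₀ h0 hba _) (pow_nonneg ha _)
          _ = a ^ (i + (n - 1 - i)) := (pow_add a i (n - 1 - i)).symm
          _ = a ^ (n - 1) := by congr 1; omega
    _ = n * a ^ (n - 1) := by
        rw [Finset.sum_const, Finset.card_range, nsmul_eq_mul]

lemma sum_box_le (d : ℕ) (hd : 3 ≤ d) (M : ℕ) :
    ∑ z ∈ box d M, 1 / (1 + euclidNorm d z ^ (d - 2))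
      ≤ 1 + (2 * d * 3 ^ (d - 1) : ℝ) * (M : ℝ) ^ 2 := by
  induction M with
  | zero =>
      have hbox : box d 0 = {fun _ => (0:ℤ)} := by
        rw [box]
        simp [Finset.Icc_self]
      rw [hbox, Finset.sum_singleton]
      have : euclidNorm d (fun _ => (0:ℤ)) = 0 := by
        simp [euclidNorm]
      rw [this, zero_pow (by omega : d - 2 ≠ 0)]
      norm_num
  | succ M ih =>
      have hsub : box d M ⊆ box d (M + 1) := box_mono d (by omega)
      rw [← Finset.sum_sdiff hsub]
      have hc0 : (0:ℝ) < (M:ℝ) + 1 := by positivity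
      -- pointwise bound on the shell
      have hbound : ∀ z ∈ box d (M + 1) \ box d M,
          1 / (1 + euclidNorm d z ^ (d - 2)) ≤ 1 / ((M:ℝ) + 1) ^ (d - 2) := by
        intro z hz
        rw [Finset.mem_sdiff, mem_box, mem_box] at hz
        obtain ⟨h1, h2⟩ := hz
        push_neg at h2
        obtain ⟨i, hi⟩ := h2
        have habs : (M:ℤ) + 1 ≤ |z i| := by
          rcases le_or_gt (-(M:ℤ)) (z i) with h | h
          · have := hi h
            rw [abs_of_nonneg (by omega)]
            omega
          · rw [abs_of_neg (by omega)]
            omega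
        have hnorm : (M:ℝ) + 1 ≤ euclidNorm d z := by
          refine le_trans ?_ (abs_le_euclidNorm d z i)
          rw [← Int.cast_abs]
          exact_mod_cast habs
        exact f_le d z hc0 hnorm
      have hcard : ((box d (M + 1) \ box d M).card : ℝ)
          ≤ 2 * d * 3 ^ (d - 1) * ((M:ℝ) + 1) ^ (d - 1) := by
        rw [Finset.card_sdiff_of_subset hsub, box_card, box_card]
        rw [Nat.cast_sub (Nat.pow_le_pow_left (by omega) d)]
        push_cast
        have key := pow_sub_pow_le (2 * (M:ℝ) + 3) (2 * (M:ℝ) + 1) (by positivity)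
          (by linarith) d
        have h3 : (2 * (M:ℝ) + 3) ^ (d - 1) ≤ (3 * ((M:ℝ) + 1)) ^ (d - 1) :=
          pow_le_pow_left₀ (by positivity) (by linarith) _
        rw [mul_pow] at h3
        have : (2 * ((M:ℝ) + 1) + 1) ^ d - (2 * (M:ℝ) + 1) ^ d
            = (2 * (M:ℝ) + 3) ^ d - (2 * (M:ℝ) + 1) ^ d := by ring_nf
        calc (2 * ((M:ℝ) + 1) + 1) ^ d - (2 * (M:ℝ) + 1) ^ d
            ≤ (d:ℝ) * (2 * (M:ℝ) + 3) ^ (d - 1) * 2 := by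
              rw [this]; linarith [key]
          _ ≤ 2 * d * 3 ^ (d - 1) * ((M:ℝ) + 1) ^ (d - 1) := by nlinarith [h3, Nat.cast_nonneg (α := ℝ) d]
      have hshell : ∑ z ∈ box d (M + 1) \ box d M, 1 / (1 + euclidNorm d z ^ (d - 2))
          ≤ 2 * (d:ℝ) * 3 ^ (d - 1) * ((M:ℝ) + 1) := by
        calc ∑ z ∈ box d (M + 1) \ box d M, 1 / (1 + euclidNorm d z ^ (d - 2))
            ≤ (box d (M + 1) \ box d M).card • (1 / ((M:ℝ) + 1) ^ (d - 2)) :=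
              Finset.sum_le_card_nsmul _ _ _ hbound
          _ = ((box d (M + 1) \ box d M).card : ℝ) * (1 / ((M:ℝ) + 1) ^ (d - 2)) := by
              rw [nsmul_eq_mul]
          _ ≤ (2 * d * 3 ^ (d - 1) * ((M:ℝ) + 1) ^ (d - 1)) * (1 / ((M:ℝ) + 1) ^ (d - 2)) := by
              apply mul_le_mul_of_nonneg_right hcard (by positivity)
          _ = 2 * (d:ℝ) * 3 ^ (d - 1) * ((M:ℝ) + 1) := by
              have : ((M:ℝ) + 1) ^ (d - 1) = ((M:ℝ) + 1) ^ (d - 2) * ((M:ℝ) + 1) := by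
                rw [← pow_succ]
                congr 1
                omega
              rw [this]
              field_simp
      push_cast
      have hM0 : (0:ℝ) ≤ (M:ℝ) := Nat.cast_nonneg M
      have hd0 : (0:ℝ) ≤ (d:ℝ) := Nat.cast_nonneg d
      have h3p : (0:ℝ) ≤ (3:ℝ) ^ (d - 1) := by positivity
      nlinarith [hshell, ih, mul_nonneg (mul_nonneg hd0 h3p) hM0]

theorem stmt_3 (d : ℕ) (hd : 3 ≤ d) :
    ∃ C > 0, ∀ Λ : Finset (Fin d → ℤ),
      ∑ z ∈ Λ, 1 / (1 + euclidNorm d z ^ (d - 2)) ≤ C * (Λ.card : ℝ) ^ (2 / (d : ℝ)) := by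
  have hd0 : (0:ℝ) < (d:ℝ) := by positivity
  set c : ℝ := 2 * d * 3 ^ (d - 1) with hc_def
  have hc : 0 < c := by positivity
  refine ⟨4 * c + 3, by positivity, ?_⟩
  intro Λ
  rcases Nat.eq_zero_or_pos Λ.card with h0 | hpos
  · rw [Finset.card_eq_zero] at h0
    subst h0
    simp only [Finset.sum_empty, Finset.card_empty, Nat.cast_zero]
    rw [Real.zero_rpow (by positivity : 2 / (d:ℝ) ≠ 0)]
    simp
  · set n := Λ.card with hn_def
    set r : ℝ := (n : ℝ) ^ ((d:ℝ)⁻¹) with hr_def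
    have hn1 : (1:ℝ) ≤ (n:ℝ) := by exact_mod_cast hpos
    have hr1 : 1 ≤ r := Real.one_le_rpow hn1 (by positivity)
    have hr0 : 0 < r := lt_of_lt_of_le one_pos hr1
    have hrd : r ^ d = (n:ℝ) := by
      rw [hr_def, ← Real.rpow_natCast ((n:ℝ) ^ ((d:ℝ)⁻¹)) d, ← Real.rpow_mul (by positivity),
        inv_mul_cancel₀ (ne_of_gt hd0), Real.rpow_one]
    have hr2 : r ^ 2 = (n:ℝ) ^ (2 / (d:ℝ)) := by
      rw [hr_def, ← Real.rpow_natCast ((n:ℝ) ^ ((d:ℝ)⁻¹)) 2, ← Real.rpow_mul (by positivity)]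
      norm_num
      rw [inv_mul_eq_div]
    set M := ⌈r⌉₊ with hM_def
    have hMr : r ≤ (M:ℝ) := Nat.le_ceil r
    have hMle : (M:ℝ) ≤ 2 * r := by
      have := Nat.ceil_lt_add_one hr0.le
      linarith
    have hsplit : ∑ z ∈ Λ ∩ box d M, (fun z => 1 / (1 + euclidNorm d z ^ (d - 2))) z
        + ∑ z ∈ Λ \ box d M, (fun z => 1 / (1 + euclidNorm d z ^ (d - 2))) z
        = ∑ z ∈ Λ, 1 / (1 + euclidNorm d z ^ (d - 2)) :=
      Finset.sum_inter_add_sum_sdiff Λ (box d M) _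
    -- inside
    have hin : ∑ z ∈ Λ ∩ box d M, 1 / (1 + euclidNorm d z ^ (d - 2)) ≤ 1 + c * (M:ℝ) ^ 2 := by
      refine le_trans (Finset.sum_le_sum_of_subset_of_nonneg (Finset.inter_subset_right)
        (fun z _ _ => f_nonneg d z)) ?_
      exact sum_box_le d hd M
    have hin' : ∑ z ∈ Λ ∩ box d M, 1 / (1 + euclidNorm d z ^ (d - 2)) ≤ (1 + 4 * c) * r ^ 2 := by
      have h1 : (M:ℝ) ^ 2 ≤ 4 * r ^ 2 := by nlinarith
      have h2 : (1:ℝ) ≤ r ^ 2 := by nlinarith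
      nlinarith
    -- outside
    have hout : ∑ z ∈ Λ \ box d M, 1 / (1 + euclidNorm d z ^ (d - 2)) ≤ r ^ 2 := by
      have hb : ∀ z ∈ Λ \ box d M,
          1 / (1 + euclidNorm d z ^ (d - 2)) ≤ 1 / r ^ (d - 2) := by
        intro z hz
        rw [Finset.mem_sdiff] at hz
        have h2 := hz.2
        rw [mem_box] at h2
        push_neg at h2
        obtain ⟨i, hi⟩ := h2
        have habs : (M:ℤ) + 1 ≤ |z i| := by
          rcases le_or_gt (-(M:ℤ)) (z i) with h | h
          · have := hi h
            rw [abs_of_nonneg (by omega)]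
            omega
          · rw [abs_of_neg (by omega)]
            omega
        have hnorm : r ≤ euclidNorm d z := by
          refine le_trans ?_ (abs_le_euclidNorm d z i)
          have : ((M:ℝ) + 1) ≤ |(z i : ℝ)| := by
            rw [← Int.cast_abs]
            exact_mod_cast habs
          linarith
        exact f_le d z hr0 hnorm
      calc ∑ z ∈ Λ \ box d M, 1 / (1 + euclidNorm d z ^ (d - 2))
          ≤ (Λ \ box d M).card • (1 / r ^ (d - 2)) := Finset.sum_le_card_nsmul _ _ _ hb
        _ = ((Λ \ box d M).card : ℝ) * (1 / r ^ (d - 2)) := by rw [nsmul_eq_mul]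
        _ ≤ (n:ℝ) * (1 / r ^ (d - 2)) := by
            apply mul_le_mul_of_nonneg_right _ (by positivity)
            exact_mod_cast Finset.card_le_card (Finset.sdiff_subset)
        _ = r ^ 2 := by
            rw [← hrd]
            have : r ^ d = r ^ (d - 2) * r ^ 2 := by
              rw [← pow_add]
              congr 1
              omega
            rw [this]
            field_simp

    rw [← hsplit, ← hr2]
    simp only
    nlinarith [hin', hout]
end

section
/- Let $q \in (0,1]$, $\alpha = 1 - 2^{-(1-q)}$, and suppose $t_1, \dots, t_k > 0$ with $k \ge 2$. Assume the inequality $t_1^q + \cdots + t_{k-1}^q \ge (t_1 + \cdots + t_{k-1})^q + \alpha((k-2)\min_{i \le k-1} t_i)^q$ holds. Then $t_1^q + \cdots + t_k^q \ge (t_1 + \cdots + t_k)^q + \alpha\big(\min(t_k, \textstyle\sum_{i<k} t_i)^q + ((k-2)\min_{i \le k-1} t_i)^q\big) \ge (t_1 + \cdots + t_k)^q + \alpha((k-1)\min_{i \le k} t_i)^q$. -/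
private lemma subadd_rpow {p : ℝ} (hp0 : 0 ≤ p) (hp1 : p ≤ 1) {x y : ℝ} (hx : 0 ≤ x)
    (hy : 0 ≤ y) : (x + y) ^ p ≤ x ^ p + y ^ p := by
  lift x to NNReal using hx
  lift y to NNReal using hy
  exact_mod_cast NNReal.rpow_add_le_add_rpow x y hp0 hp1

private lemma two_point {q : ℝ} (hq0 : 0 < q) (hq1 : q ≤ 1) {a b : ℝ} (ha : 0 < a)
    (hab : a ≤ b) : (a + b) ^ q + a ^ q ≤ (2 * a) ^ q + b ^ q := by
  have hb : 0 < b := lt_of_lt_of_le ha hab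
  have hcc := Real.concaveOn_rpow hq0.le hq1
  set lam : ℝ := a / b with hlam
  have hlam0 : 0 ≤ lam := by positivity
  have hlam1 : lam ≤ 1 := by rw [hlam, div_le_one hb]; exact hab
  have h1 : (1 - lam) * a + lam * (a + b) = 2 * a := by
    field_simp [hlam]; rw [hlam]; linear_combination a * mul_inv_cancel₀ hb.ne'
  have h2 : lam * a + (1 - lam) * (a + b) = b := by
    field_simp [hlam]; rw [hlam]; linear_combination (-a) * mul_inv_cancel₀ hb.ne'
  have c1 : (1 - lam) * a ^ q + lam * (a + b) ^ q ≤ ((1 - lam) * a + lam * (a + b)) ^ q :=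
    hcc.2 (Set.mem_Ici.mpr ha.le) (Set.mem_Ici.mpr (by linarith : (0:ℝ) ≤ a + b))
      (by linarith) hlam0 (by ring)
  have c2 : lam * a ^ q + (1 - lam) * (a + b) ^ q ≤ (lam * a + (1 - lam) * (a + b)) ^ q :=
    hcc.2 (Set.mem_Ici.mpr ha.le) (Set.mem_Ici.mpr (by linarith : (0:ℝ) ≤ a + b))
      hlam0 (by linarith) (by ring)
  rw [h1] at c1
  rw [h2] at c2
  linarith

private lemma key_ineq {q : ℝ} (hq0 : 0 < q) (hq1 : q ≤ 1) {a b : ℝ} (ha : 0 < a) (hb : 0 < b) :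
    (a + b) ^ q + (1 - 2 ^ (q - 1)) * (min a b) ^ q ≤ a ^ q + b ^ q := by
  wlog hab : a ≤ b generalizing a b
  · have := this hb ha (le_of_not_ge hab)
    rw [min_comm, add_comm b a] at this
    linarith
  rw [min_eq_left hab]
  have h := two_point hq0 hq1 ha hab
  have h2a : (2 * a) ^ q = 2 ^ q * a ^ q := Real.mul_rpow (by norm_num) ha.le
  have h2q : (2:ℝ) ^ q = 2 * 2 ^ (q - 1) := by
    rw [show q = 1 + (q - 1) by ring, Real.rpow_add (by norm_num), Real.rpow_one]
    ring_nf
  have hle1 : (2:ℝ) ^ (q - 1) ≤ 1 :=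
    Real.rpow_le_one_of_one_le_of_nonpos (by norm_num) (by linarith)
  have haq : 0 < a ^ q := Real.rpow_pos_of_pos ha q
  nlinarith



theorem stmt_14 (q : ℝ) (hq0 : 0 < q) (hq1 : q ≤ 1) (α : ℝ)
    (hα : α = 1 - 1 / 2 ^ (1 - q)) (k : ℕ) (hk : 2 ≤ k) (t : ℕ → ℝ)
    (ht : ∀ i, 1 ≤ i → i ≤ k → 0 < t i)
    (hind : ∑ i ∈ Finset.Icc 1 (k - 1), t i ^ q ≥
      (∑ i ∈ Finset.Icc 1 (k - 1), t i) ^ q +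
        α * (((k : ℝ) - 2) *
          (Finset.Icc 1 (k - 1)).inf' (Finset.nonempty_Icc.mpr (by omega)) t) ^ q) :
    (∑ i ∈ Finset.Icc 1 k, t i ^ q ≥
      (∑ i ∈ Finset.Icc 1 k, t i) ^ q +
        α * ((min (t k) (∑ i ∈ Finset.Icc 1 (k - 1), t i)) ^ q +
          (((k : ℝ) - 2) *
            (Finset.Icc 1 (k - 1)).inf' (Finset.nonempty_Icc.mpr (by omega)) t) ^ q))
    ∧
    ((∑ i ∈ Finset.Icc 1 k, t i) ^ q +
        α * ((min (t k) (∑ i ∈ Finset.Icc 1 (k - 1), t i)) ^ q +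
          (((k : ℝ) - 2) *
            (Finset.Icc 1 (k - 1)).inf' (Finset.nonempty_Icc.mpr (by omega)) t) ^ q)
      ≥ (∑ i ∈ Finset.Icc 1 k, t i) ^ q +
          α * (((k : ℝ) - 1) *
            (Finset.Icc 1 k).inf' (Finset.nonempty_Icc.mpr (by omega)) t) ^ q) := by
  have hα' : α = 1 - 2 ^ (q - 1) := by
    rw [hα, show q - 1 = -(1 - q) by ring, Real.rpow_neg (by norm_num), one_div]
  have hα0 : 0 ≤ α := by
    have : (2:ℝ) ^ (q - 1) ≤ 1 :=
      Real.rpow_le_one_of_one_le_of_nonpos (by norm_num) (by linarith)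
    rw [hα']; linarith
  have hk2 : (0:ℝ) ≤ (k:ℝ) - 2 := by
    have : (2:ℝ) ≤ (k:ℝ) := by exact_mod_cast hk
    linarith
  set m : ℝ := (Finset.Icc 1 (k-1)).inf' (Finset.nonempty_Icc.mpr (by omega)) t with hmdef
  set m' : ℝ := (Finset.Icc 1 k).inf' (Finset.nonempty_Icc.mpr (by omega)) t with hm'def
  set S : ℝ := ∑ i ∈ Finset.Icc 1 (k-1), t i with hSdef
  have htk : 0 < t k := ht k (by omega) le_rfl
  have hS : 0 < S := Finset.sum_pos
    (fun i hi => by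
      rw [Finset.mem_Icc] at hi; exact ht i hi.1 (by omega))
    (Finset.nonempty_Icc.mpr (by omega))
  have hm' : 0 < m' := by
    rw [hm'def, Finset.lt_inf'_iff]
    intro i hi; rw [Finset.mem_Icc] at hi; exact ht i hi.1 hi.2
  have hm'm : m' ≤ m :=
    Finset.inf'_mono t (Finset.Icc_subset_Icc_right (by omega)) _
  have hm'tk : m' ≤ t k := Finset.inf'_le t (by rw [Finset.mem_Icc]; omega)
  have hm'S : m' ≤ S := by
    have h1 : m' ≤ t 1 := Finset.inf'_le t (by rw [Finset.mem_Icc]; omega)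
    have h2 : t 1 ≤ S := Finset.single_le_sum
      (fun i hi => by rw [Finset.mem_Icc] at hi; exact (ht i hi.1 (by omega)).le)
      (by rw [Finset.mem_Icc]; omega)
    linarith
  have hicc : Finset.Icc 1 k = insert k (Finset.Icc 1 (k-1)) := by
    ext i; simp only [Finset.mem_Icc, Finset.mem_insert]; omega
  have hknot : k ∉ Finset.Icc 1 (k-1) := by rw [Finset.mem_Icc]; omega
  have hsum : ∑ i ∈ Finset.Icc 1 k, t i = t k + S := by
    rw [hicc, Finset.sum_insert hknot, hSdef]
  have hsumq : ∑ i ∈ Finset.Icc 1 k, t i ^ q = t k ^ q + ∑ i ∈ Finset.Icc 1 (k-1), t i ^ q := by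
    rw [hicc, Finset.sum_insert hknot]
  have hkey := key_ineq hq0 hq1 htk hS
  rw [← hα'] at hkey
  constructor
  · rw [hsum, hsumq, mul_add]
    linarith [hind]
  · rw [ge_iff_le, add_le_add_iff_left]
    refine mul_le_mul_of_nonneg_left ?_ hα0
    have e1 : ((k:ℝ) - 1) * m' = m' + ((k:ℝ) - 2) * m' := by ring
    have e2 : (((k:ℝ) - 1) * m') ^ q ≤ m' ^ q + (((k:ℝ) - 2) * m') ^ q := by
      rw [e1]
      exact subadd_rpow hq0.le hq1 hm'.le (mul_nonneg hk2 hm'.le)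
    have e3 : m' ^ q ≤ (min (t k) S) ^ q :=
      Real.rpow_le_rpow hm'.le (le_min hm'tk hm'S) hq0.le
    have e4 : (((k:ℝ) - 2) * m') ^ q ≤ (((k:ℝ) - 2) * m) ^ q :=
      Real.rpow_le_rpow (mul_nonneg hk2 hm'.le)
        (mul_le_mul_of_nonneg_left hm'm hk2) hq0.le
    linarith
end
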